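/- Let L be a field of characteristic not equal to 2, let a_1, ..., a_k ∈ L with α_s² = a_s for α_s in the algebraic closure, and suppose [L(α_1,...,α_k) : L] = 2^k. If γ ∈ L(α_1,...,α_k) \ L satisfies γ² ∈ L, then there exists a subset I ⊆ {1,...,k} such that γ · ∏_{s∈I} α_s ∈ L. -/

import Mathlib

open IntermediateField Module Polynomial

lemma quad_aux {F E : Type*} [Field F] [Field E] [Algebra F E] (b : E) (c : F)
    (h : b ^ 2 = algebraMap F E c) :
    IsIntegral F b ∧ FiniteDimensional F F⟮b⟯ ∧ finrank F F⟮b⟯ ≤ 2 := by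
  have hm : (X ^ 2 - C c : F[X]).Monic := Polynomial.monic_X_pow_sub_C _ two_ne_zero
  have hev : (Polynomial.aeval b) (X ^ 2 - C c) = 0 := by simp [h]
  have hint : IsIntegral F b := ⟨X ^ 2 - C c, hm, hev⟩
  refine ⟨hint, adjoin.finiteDimensional hint, ?_⟩
  rw [adjoin.finrank hint]
  have hdeg := minpoly.degree_le_of_ne_zero F b hm.ne_zero hev
  have h2 : (X ^ 2 - C c : F[X]).degree = 2 := by compute_degree!
  rw [h2] at hdeg
  simpa using Polynomial.natDegree_le_iff_degree_le.mpr hdeg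

lemma le_pow_aux {L E : Type*} [Field L] [Field E] [Algebra L E] (k : ℕ)
    (a : Fin k → L) (α : Fin k → E)
    (hsq : ∀ s, (α s) ^ 2 = algebraMap L E (a s)) :
    finrank L (adjoin L (Set.range α)) ≤ 2 ^ k := by
  induction k with
  | zero =>
    rw [Set.range_eq_empty, adjoin_empty]
    simp [IntermediateField.finrank_bot]
  | succ k ih =>
    set K := adjoin L (Set.range (Fin.tail α)) with hK
    have hM : IntermediateField.restrictScalars L (adjoin K {α 0}) = adjoin L (Set.range α) := by
      rw [adjoin_adjoin_left, Set.union_singleton, ← Fin.range_fin_succ]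
    obtain ⟨hint, hFD, hle⟩ := quad_aux (F := K) (α 0) (algebraMap L K (a 0)) (by
      rw [← IsScalarTower.algebraMap_apply]; exact hsq 0)
    have h1 : finrank L (adjoin L (Set.range α)) = finrank L K * finrank K (adjoin K {α 0}) := by
      haveI : Module.Free K (adjoin K {α 0}) := Module.Free.of_divisionRing _ _; rw [Module.finrank_mul_finrank]
      rw [← hM]; rfl
    rw [h1, pow_succ]
    exact Nat.mul_le_mul (ih (fun s => a s.succ) (Fin.tail α) (fun s => hsq s.succ)) hle

lemma main_aux {L E : Type*} [Field L] [Field E] [Algebra L E] (h2 : (2 : E) ≠ 0) :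
    ∀ (k : ℕ) (a : Fin k → L) (α : Fin k → E),
    (∀ s, (α s) ^ 2 = algebraMap L E (a s)) →
    finrank L (adjoin L (Set.range α)) = 2 ^ k →
    ∀ γ : E, γ ∈ adjoin L (Set.range α) → γ ∉ Set.range (algebraMap L E) →
    γ ^ 2 ∈ Set.range (algebraMap L E) →
    ∃ I : Finset (Fin k), γ * ∏ s ∈ I, α s ∈ Set.range (algebraMap L E) := by
  intro k
  induction k with
  | zero =>
    intro a α hsq hdeg γ hγmem hγnot hγsq
    rw [Set.range_eq_empty, adjoin_empty] at hγmem
    exact absurd (IntermediateField.mem_bot.mp hγmem) hγnot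
  | succ k ih =>
    intro a α hsq hdeg γ hγmem hγnot hγsq
    set β := α 0 with hβ
    set K := adjoin L (Set.range (Fin.tail α)) with hK
    have hM : IntermediateField.restrictScalars L (adjoin K {β}) = adjoin L (Set.range α) := by
      rw [adjoin_adjoin_left, Set.union_singleton, ← Fin.range_fin_succ]
    have hA : β ^ 2 = algebraMap L E (a 0) := hsq 0
    obtain ⟨hint, hFD, hle⟩ := quad_aux (F := K) β (algebraMap L K (a 0)) (by
      rw [← IsScalarTower.algebraMap_apply]; exact hA)
    have hprod : finrank L K * finrank K (adjoin K {β}) = 2 ^ k * 2 := by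
      haveI : Module.Free K (adjoin K {β}) := Module.Free.of_divisionRing _ _; rw [Module.finrank_mul_finrank, ← pow_succ, ← hdeg, ← hM]; rfl
    have hKle : finrank L K ≤ 2 ^ k :=
      le_pow_aux k (fun s => a s.succ) (Fin.tail α) (fun s => hsq s.succ)
    have hge : 2 ^ k * 2 ≤ 2 ^ k * finrank K (adjoin K {β}) := by
      calc 2 ^ k * 2 = finrank L K * finrank K (adjoin K {β}) := hprod.symm
        _ ≤ 2 ^ k * finrank K (adjoin K {β}) := Nat.mul_le_mul_right _ hKle
    have hN2 : finrank K (adjoin K {β}) = 2 :=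
      le_antisymm hle (Nat.le_of_mul_le_mul_left hge (Nat.pow_pos (n := k) (by norm_num)))
    have hK2 : finrank L K = 2 ^ k := by
      rw [hN2] at hprod
      exact Nat.eq_of_mul_eq_mul_right (by norm_num) hprod
    have hβK : β ∉ K := by
      intro hmem
      have : K⟮β⟯ = ⊥ := adjoin_simple_eq_bot_iff.mpr
        (IntermediateField.mem_bot.mpr ⟨⟨β, hmem⟩, rfl⟩)
      rw [this, IntermediateField.finrank_bot] at hN2
      omega
    have hAK : algebraMap L E (a 0) ∈ K := IntermediateField.algebraMap_mem K _
    have hsub : ∀ z ∈ Algebra.adjoin K ({β} : Set E),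
        ∃ x ∈ K, ∃ y ∈ K, z = x + y * β := by
      intro z hz
      induction hz using Algebra.adjoin_induction with
      | mem w hw =>
        rw [Set.mem_singleton_iff] at hw
        exact ⟨0, zero_mem K, 1, one_mem K, by rw [hw]; ring⟩
      | algebraMap r =>
        exact ⟨algebraMap K E r, r.2, 0, zero_mem K, by ring⟩
      | add u v hu hv ihu ihv =>
        obtain ⟨x1, hx1, y1, hy1, rfl⟩ := ihu
        obtain ⟨x2, hx2, y2, hy2, rfl⟩ := ihv
        exact ⟨x1 + x2, add_mem hx1 hx2, y1 + y2, add_mem hy1 hy2, by ring⟩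
      | mul u v hu hv ihu ihv =>
        obtain ⟨x1, hx1, y1, hy1, rfl⟩ := ihu
        obtain ⟨x2, hx2, y2, hy2, rfl⟩ := ihv
        refine ⟨x1 * x2 + y1 * y2 * algebraMap L E (a 0),
          add_mem (mul_mem hx1 hx2) (mul_mem (mul_mem hy1 hy2) hAK),
          x1 * y2 + x2 * y1, add_mem (mul_mem hx1 hy2) (mul_mem hx2 hy1), ?_⟩
        linear_combination (y1 * y2) * hA
    have hγN : γ ∈ Algebra.adjoin K ({β} : Set E) := by
      rw [← adjoin_simple_toSubalgebra_of_isAlgebraic hint.isAlgebraic]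
      have : γ ∈ IntermediateField.restrictScalars L (adjoin K {β}) := by rw [hM]; exact hγmem
      exact this
    obtain ⟨x, hx, y, hy, hxy⟩ := hsub γ hγN
    obtain ⟨c, hc⟩ := hγsq
    have hxy0 : x * y = 0 := by
      by_contra hne
      apply hβK
      have h2xy : (2 * x * y : E) ≠ 0 := by
        intro h; apply hne
        rcases mul_eq_zero.mp h with h' | h'
        · rcases mul_eq_zero.mp h' with h'' | h''
          · exact absurd h'' h2
          · rw [h'']; ring
        · rw [h']; ring
      have key : (2 * x * y) * β = algebraMap L E c - x ^ 2 - y ^ 2 * algebraMap L E (a 0) := by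
        rw [hxy] at hc
        linear_combination -hc - y ^ 2 * hA
      have hβeq : β = (algebraMap L E c - x ^ 2 - y ^ 2 * algebraMap L E (a 0)) / (2 * x * y) := by
        rw [eq_div_iff h2xy]
        linear_combination key
      rw [hβeq]
      refine IntermediateField.div_mem _ ?_ ?_
      · exact sub_mem (sub_mem (IntermediateField.algebraMap_mem K c) (pow_mem hx 2))
          (mul_mem (pow_mem hy 2) hAK)
      · refine mul_mem (mul_mem ?_ hx) hy
        have h2a : (2 : E) = algebraMap L E 2 := (map_ofNat (algebraMap L E) 2).symm
        rw [h2a]; exact IntermediateField.algebraMap_mem K _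
    rcases mul_eq_zero.mp hxy0 with hx0 | hy0
    · -- x = 0 : γ = y * β
      have hγeq : γ = y * β := by rw [hxy, hx0]; ring
      have ha0 : a 0 ≠ 0 := by
        intro h
        apply hβK
        have hβ0 : β = 0 := by
          have : β ^ 2 = 0 := by rw [hA, h, map_zero]
          exact pow_eq_zero_iff (by norm_num) |>.mp this
        rw [hβ0]; exact zero_mem K
      have hA0 : algebraMap L E (a 0) ≠ 0 :=
        (map_ne_zero_iff _ (algebraMap L E).injective).mpr ha0
      by_cases hyL : y ∈ Set.range (algebraMap L E)
      · obtain ⟨l, hl⟩ := hyL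
        refine ⟨{0}, l * a 0, ?_⟩
        rw [Finset.prod_singleton, map_mul, hl, hγeq]
        linear_combination -y * hA
      · have hy2 : y ^ 2 ∈ Set.range (algebraMap L E) := by
          refine ⟨c * (a 0)⁻¹, ?_⟩
          rw [map_mul, map_inv₀, hc, hγeq, mul_pow, hA]
          exact mul_inv_cancel_right₀ hA0 (y ^ 2)
        obtain ⟨I, l, hl⟩ := ih (fun s => a s.succ) (Fin.tail α)
          (fun s => hsq s.succ) hK2 y hy hyL hy2
        refine ⟨insert 0 (I.map (Fin.succEmb k)), l * a 0, ?_⟩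
        have h0 : (0 : Fin (k + 1)) ∉ I.map (Fin.succEmb k) := by
          simp [Finset.mem_map, Fin.succEmb, Fin.succ_ne_zero]
        rw [Finset.prod_insert h0, Finset.prod_map, map_mul, hγeq]
        have hP : ∏ s ∈ I, α ((Fin.succEmb k) s) = ∏ s ∈ I, Fin.tail α s := rfl
        rw [hP, hl]
        linear_combination -(y * ∏ s ∈ I, Fin.tail α s) * hA
    · -- y = 0 : γ = x ∈ K
      have hγK : γ ∈ K := by
        rw [hxy, hy0]
        simpa using hx
      obtain ⟨I, l, hl⟩ := ih (fun s => a s.succ) (Fin.tail α)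
        (fun s => hsq s.succ) hK2 γ hγK hγnot ⟨c, hc⟩
      refine ⟨I.map (Fin.succEmb k), l, ?_⟩
      rw [Finset.prod_map]
      exact hl

theorem sqrt_in_multiquadratic
    {L : Type*} [Field L] (h2 : ringChar L ≠ 2) (k : ℕ)
    (a : Fin k → L) (α : Fin k → AlgebraicClosure L)
    (hsq : ∀ s, (α s) ^ 2 = algebraMap L (AlgebraicClosure L) (a s))
    (hdeg : Module.finrank L (IntermediateField.adjoin L (Set.range α)) = 2 ^ k)
    (γ : AlgebraicClosure L)
    (hγmem : γ ∈ IntermediateField.adjoin L (Set.range α))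
    (hγnot : γ ∉ Set.range (algebraMap L (AlgebraicClosure L)))
    (hγsq : γ ^ 2 ∈ Set.range (algebraMap L (AlgebraicClosure L))) :
    ∃ I : Finset (Fin k), γ * ∏ s ∈ I, α s ∈ Set.range (algebraMap L (AlgebraicClosure L)) := by
  have h2E : (2 : AlgebraicClosure L) ≠ 0 := by
    rw [← map_ofNat (algebraMap L (AlgebraicClosure L)) 2]
    exact (map_ne_zero_iff _ (algebraMap L (AlgebraicClosure L)).injective).mpr
      (Ring.two_ne_zero h2)
  exact main_aux h2E k a α hsq hdeg γ hγmem hγnot hγsq
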